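/- Appendix inequality (key step in the concavity of F): for every x with 1/2 ≤ x < 1, 2x(1−x)·log(x/(1−x)) ≤ 2x − 1; consequently the function F(x) = x(1−x)·log(x/(1−x))/(2x−1) (extended by F(1/2) = 1/2) is concave on (0,1). -/

import Mathlib

open Real

lemma even_pow_nonneg (t : ℝ) (k : ℕ) : 0 ≤ t ^ (2 * k + 2) := by
  have : t ^ (2 * k + 2) = (t ^ (k + 1)) ^ 2 := by ring
  rw [this]; positivity

lemma gAux_term_nonneg (t : ℝ) (k : ℕ) :
    0 ≤ t ^ (2 * k + 2) / ((2 * (k:ℝ) + 1) * (2 * k + 3)) := by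
  apply div_nonneg (even_pow_nonneg t k); positivity

lemma gAux_summable {t : ℝ} (ht : |t| < 1) :
    Summable (fun k : ℕ => t ^ (2 * k + 2) / ((2 * (k:ℝ) + 1) * (2 * k + 3))) := by
  have ht2 : t ^ 2 < 1 := by nlinarith [abs_nonneg t, sq_abs t]
  apply Summable.of_nonneg_of_le (gAux_term_nonneg t) ?_
    (summable_geometric_of_lt_one (by positivity) ht2)
  · intro k
    have h1 : t ^ (2 * k + 2) / ((2 * (k:ℝ) + 1) * (2 * k + 3)) ≤ t ^ (2 * k + 2) := by
      apply div_le_self (even_pow_nonneg t k)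
      nlinarith [k.cast_nonneg (α := ℝ)]
    have h2 : t ^ (2 * k + 2) ≤ (t ^ 2) ^ k := by
      calc t ^ (2 * k + 2) = (t ^ 2) ^ k * t ^ 2 := by ring
        _ ≤ (t ^ 2) ^ k * 1 := by gcongr
        _ = (t ^ 2) ^ k := mul_one _
    linarith

/-- key HasSum identity -/
lemma gAux_hasSum {t : ℝ} (ht : |t| < 1) (ht0 : t ≠ 0) :
    HasSum (fun k : ℕ => t ^ (2 * k + 2) / ((2 * (k:ℝ) + 1) * (2 * k + 3)))
      (1/2 - (1 - t^2) * (log (1 + t) - log (1 - t)) / (4 * t)) := by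
  have h := hasSum_log_sub_log_of_abs_lt_one ht
  set L := log (1 + t) - log (1 - t) with hL
  have hu : HasSum (fun k : ℕ => t ^ (2*k) / (2*(2*(k:ℝ)+1))) (L / (4*t)) := by
    have h2 := h.mul_left (1/(4*t))
    have e1 : (fun k : ℕ => 1/(4*t) * (2 * (1/(2*(k:ℝ)+1)) * t^(2*k+1)))
        = fun k : ℕ => t ^ (2*k) / (2*(2*(k:ℝ)+1)) := by
      funext k
      have hk : (2*(k:ℝ)+1) ≠ 0 := by positivity
      have e : t^(2*k+1) = t^(2*k)*t := by ring
      rw [e]; field_simp; ring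
    rw [e1] at h2
    have : 1/(4*t) * L = L / (4*t) := by ring
    rwa [this] at h2
  have hv : HasSum (fun k : ℕ => t^2 * (t ^ (2*k) / (2*(2*(k:ℝ)+1)))) (t^2 * (L / (4*t))) :=
    hu.mul_left _
  have hshift : HasSum (fun k : ℕ => t ^ (2*(k+1)) / (2*(2*((k:ℝ)+1)+1)))
      (L / (4*t) - 1/2) := by
    have h3 := (hasSum_nat_add_iff' (f := fun k : ℕ => t ^ (2*k) / (2*(2*(k:ℝ)+1))) 1).2 hu
    have hv0 : L / (4*t) - ∑ i ∈ Finset.range 1, t ^ (2*i) / (2*(2*(i:ℝ)+1))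
        = L / (4*t) - 1/2 := by
      simp [Finset.sum_range_one]
    rw [hv0] at h3
    convert h3 using 2 with k
    · rfl
    · push_cast; ring_nf
  have hfinal := hv.sub hshift
  have e2 : (fun k : ℕ => t^2 * (t ^ (2*k) / (2*(2*(k:ℝ)+1))) - t ^ (2*(k+1)) / (2*(2*((k:ℝ)+1)+1)))
      = fun k : ℕ => t ^ (2 * k + 2) / ((2 * (k:ℝ) + 1) * (2 * k + 3)) := by
    funext k
    have h1 : (2*(k:ℝ)+1) ≠ 0 := by positivity
    have h3 : (2*(k:ℝ)+3) ≠ 0 := by positivity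
    have e : t ^ (2*(k+1)) = t ^ (2*k) * t^2 := by ring
    rw [e]; field_simp; ring
  rw [e2] at hfinal
  have e3 : t^2 * (L / (4*t)) - (L / (4*t) - 1/2) = 1/2 - (1 - t^2) * L / (4*t) := by
    field_simp; ring
  rwa [e3] at hfinal

lemma key_hasSum {x : ℝ} (hx0 : 0 < x) (hx1 : x < 1) (hx : x ≠ 1/2) :
    HasSum (fun k : ℕ => (2*x-1) ^ (2 * k + 2) / ((2 * (k:ℝ) + 1) * (2 * k + 3)))
      (1/2 - x * (1 - x) * Real.log (x / (1 - x)) / (2 * x - 1)) := by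
  have ht : |2*x-1| < 1 := abs_lt.2 ⟨by linarith, by linarith⟩
  have ht0 : 2*x-1 ≠ 0 := fun h => hx (by linarith [h])
  have h := gAux_hasSum ht ht0
  have e1 : 1 + (2*x-1) = 2 * x := by ring
  have e2 : 1 - (2*x-1) = 2 * (1 - x) := by ring
  rw [e1, e2, Real.log_mul two_ne_zero (ne_of_gt hx0),
    Real.log_mul two_ne_zero (by linarith : (1:ℝ) - x ≠ 0)] at h
  have e3 : 1/2 - (1 - (2*x-1)^2) * (Real.log 2 + Real.log x - (Real.log 2 + Real.log (1-x)))
        / (4 * (2*x-1))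
      = 1/2 - x * (1 - x) * Real.log (x / (1 - x)) / (2 * x - 1) := by
    rw [Real.log_div (ne_of_gt hx0) (by linarith : (1:ℝ) - x ≠ 0)]
    field_simp
    ring
  rw [← e3]
  convert h using 2

/-- Appendix inequality: for `1/2 ≤ x < 1`, `2x(1−x)log(x/(1−x)) ≤ 2x − 1`; consequently
the function `F(x) = x(1−x)log(x/(1−x))/(2x−1)` (extended by `F(1/2) = 1/2`) is concave
on `(0,1)`. -/
theorem appendix_inequality_and_concavity :
    (∀ x : ℝ, 1/2 ≤ x → x < 1 →
      2 * x * (1 - x) * Real.log (x / (1 - x)) ≤ 2 * x - 1) ∧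
    ConcaveOn ℝ (Set.Ioo (0 : ℝ) 1)
      (fun x : ℝ => if x = 1/2 then 1/2
        else x * (1 - x) * Real.log (x / (1 - x)) / (2 * x - 1)) := by
  constructor
  · -- Part 1: the inequality
    intro x hx hx1
    rcases eq_or_lt_of_le hx with h | h
    · rw [← h]; norm_num
    · have hx0 : 0 < x := by linarith
      have hne : x ≠ 1/2 := by intro hc; rw [hc] at h; linarith
      have hs := key_hasSum hx0 hx1 hne
      have hnn : 0 ≤ 1/2 - x * (1 - x) * Real.log (x / (1 - x)) / (2 * x - 1) :=
        hs.nonneg (fun k => gAux_term_nonneg _ k)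
      have ht0 : (0:ℝ) < 2*x-1 := by linarith
      rw [le_sub_iff_add_le, zero_add, div_le_iff₀ ht0] at hnn
      nlinarith
  · -- Part 2: concavity
    have hconv : ConvexOn ℝ (Set.Ioo (0:ℝ) 1)
        (fun x : ℝ => ∑' k : ℕ, (2*x-1) ^ (2 * k + 2) / ((2 * (k:ℝ) + 1) * (2 * k + 3))) := by
      refine ⟨convex_Ioo 0 1, ?_⟩
      intro x hx y hy a b ha hb hab
      simp only [smul_eq_mul]
      set s := 2*x-1 with hsdef
      set r := 2*y-1 with hrdef
      have hs : |s| < 1 := abs_lt.2 ⟨by simp [hsdef]; linarith [hx.1], by simp [hsdef]; linarith [hx.2]⟩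
      have hr : |r| < 1 := abs_lt.2 ⟨by simp [hrdef]; linarith [hy.1], by simp [hrdef]; linarith [hy.2]⟩
      have hcomb : 2*(a*x+b*y)-1 = a*s + b*r := by
        simp only [hsdef, hrdef]; nlinarith [hab]
      have habs : |a*s + b*r| < 1 := by
        calc |a*s + b*r| ≤ a * |s| + b * |r| := by
              refine (abs_add_le _ _).trans ?_
              rw [abs_mul, abs_mul, abs_of_nonneg ha, abs_of_nonneg hb]
          _ < 1 := by
              rcases ha.eq_or_lt with h0 | h0
              · have hb1 : b = 1 := by linarith
                rw [← h0, hb1]; simpa using hr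
              · nlinarith [mul_lt_mul_of_pos_left hs h0,
                  mul_le_mul_of_nonneg_left hr.le hb]
      have hterm : ∀ k : ℕ, (2*(a*x+b*y)-1) ^ (2*k+2) / ((2*(k:ℝ)+1)*(2*k+3))
          ≤ a * (s ^ (2*k+2) / ((2*(k:ℝ)+1)*(2*k+3)))
            + b * (r ^ (2*k+2) / ((2*(k:ℝ)+1)*(2*k+3))) := by
        intro k
        have hD : (0:ℝ) < (2*(k:ℝ)+1)*(2*k+3) := by positivity
        have hpow := (Even.convexOn_pow (𝕜 := ℝ) (n := 2*k+2) ⟨k+1, by ring⟩).2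
          (Set.mem_univ s) (Set.mem_univ r) ha hb hab
        simp only [smul_eq_mul] at hpow
        rw [hcomb]
        rw [div_le_iff₀ hD]
        calc (a*s + b*r) ^ (2*k+2) ≤ a * s ^ (2*k+2) + b * r ^ (2*k+2) := hpow
          _ = (a * (s ^ (2*k+2) / ((2*(k:ℝ)+1)*(2*k+3)))
              + b * (r ^ (2*k+2) / ((2*(k:ℝ)+1)*(2*k+3)))) * ((2*(k:ℝ)+1)*(2*k+3)) := by
            field_simp
      have hsum1 : Summable (fun k : ℕ => (2*(a*x+b*y)-1) ^ (2*k+2) / ((2*(k:ℝ)+1)*(2*k+3))) := by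
        rw [show (fun k : ℕ => (2*(a*x+b*y)-1) ^ (2*k+2) / ((2*(k:ℝ)+1)*(2*k+3)))
          = fun k : ℕ => (a*s+b*r) ^ (2*k+2) / ((2*(k:ℝ)+1)*(2*k+3)) by
            funext k; rw [hcomb]]
        exact gAux_summable habs
      have hsum2 := (gAux_summable hs).mul_left a
      have hsum3 := (gAux_summable hr).mul_left b
      calc (∑' k : ℕ, (2*(a*x+b*y)-1) ^ (2*k+2) / ((2*(k:ℝ)+1)*(2*k+3)))
          ≤ ∑' k : ℕ, (a * (s ^ (2*k+2) / ((2*(k:ℝ)+1)*(2*k+3)))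
              + b * (r ^ (2*k+2) / ((2*(k:ℝ)+1)*(2*k+3)))) :=
            Summable.tsum_le_tsum hterm hsum1 (hsum2.add hsum3)
        _ = a * (∑' k : ℕ, s ^ (2*k+2) / ((2*(k:ℝ)+1)*(2*k+3)))
            + b * (∑' k : ℕ, r ^ (2*k+2) / ((2*(k:ℝ)+1)*(2*k+3))) := by
            rw [Summable.tsum_add hsum2 hsum3, tsum_mul_left, tsum_mul_left]
    have hconc := (hconv.neg).add_const (1/2 : ℝ)
    apply hconc.congr
    intro x hx
    by_cases hne : x = 1/2
    · subst hne
      simp only [if_pos rfl, Pi.add_apply, Pi.neg_apply]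
      have : ∀ k : ℕ, (2*(1/2:ℝ)-1) ^ (2 * k + 2) / ((2 * (k:ℝ) + 1) * (2 * k + 3)) = 0 := by
        intro k
        norm_num
      rw [tsum_congr this]
      simp
    · simp only [if_neg hne, Pi.add_apply, Pi.neg_apply]
      have := (key_hasSum hx.1 hx.2 hne).tsum_eq
      rw [this]
      ring
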